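/- Let c ≥ 0 and ζ ∈ ℂ with ζ ∉ [c,∞), write ψ = arg(ζ − c) ∈ (0,2π). Then for every real x ≥ c: if |ζ − c| < 1 one has x/|x − ζ|² ≤ (c + 1)·c(ψ)²·|ζ − c|⁻², and if |ζ − c| ≥ 1 one has x/|x − ζ|² ≤ (c + 1)·c(ψ)²·|ζ − c|⁻¹. -/

import Mathlib

private lemma aux_div (a Dd K b : ℝ) (hDd : 0 < Dd) (hb : 0 < b)
    (h : a * b ≤ K * Dd) : a / Dd ≤ K * b⁻¹ := by
  rw [← div_eq_mul_inv, div_le_div_iff₀ hDd hb]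
  exact h


/-- The coefficient `c(ψ)` from the paper, for `ψ ∈ (0, 2π)`:
`c(ψ) = 1/|sin ψ|` if `ψ ∈ (0, π/2) ∪ (3π/2, 2π)`, and `c(ψ) = 1` if `ψ ∈ [π/2, 3π/2]`. -/
noncomputable def cArg (ψ : ℝ) : ℝ :=
  if (0 < ψ ∧ ψ < Real.pi / 2) ∨ (3 * Real.pi / 2 < ψ ∧ ψ < 2 * Real.pi) then
    |Real.sin ψ|⁻¹
  else 1

set_option maxHeartbeats 1000000 in
/-- For `c ≥ 0`, `ζ ∈ ℂ \ [c,∞)` with `ψ = arg(ζ − c) ∈ (0, 2π)`, and every real `x ≥ c`: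
if `|ζ − c| < 1` then `x/|x − ζ|² ≤ (c+1) c(ψ)² |ζ − c|⁻²`, and if `|ζ − c| ≥ 1` then
`x/|x − ζ|² ≤ (c+1) c(ψ)² |ζ − c|⁻¹`. -/
theorem sup_x_div_abs_sq (c : ℝ) (hc : 0 ≤ c) (ζ : ℂ) (ψ : ℝ)
    (hζ : ∀ x : ℝ, c ≤ x → ζ ≠ (x : ℂ))
    (hψ : ψ ∈ Set.Ioo (0 : ℝ) (2 * Real.pi))
    (hζψ : ζ - (c : ℂ) = ((‖ζ - (c : ℂ)‖ : ℝ) : ℂ) * Complex.exp ((ψ : ℂ) * Complex.I)) :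
    ∀ x : ℝ, c ≤ x →
      (‖ζ - (c : ℂ)‖ < 1 →
        x / ‖(x : ℂ) - ζ‖ ^ 2
          ≤ (c + 1) * cArg ψ ^ 2 * (‖ζ - (c : ℂ)‖)⁻¹ ^ 2) ∧
      (1 ≤ ‖ζ - (c : ℂ)‖ →
        x / ‖(x : ℂ) - ζ‖ ^ 2
          ≤ (c + 1) * cArg ψ ^ 2 * (‖ζ - (c : ℂ)‖)⁻¹) := by
  intro x hx
  set r := ‖ζ - (c : ℂ)‖ with hrdef
  have hr0 : 0 < r := norm_pos_iff.mpr (sub_ne_zero.2 (hζ c le_rfl))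
  set t := x - c with htdef
  have ht : 0 ≤ t := sub_nonneg.2 hx
  have hxt : x = t + c := by rw [htdef]; ring
  have hne : (x : ℂ) - ζ ≠ 0 := sub_ne_zero.2 (hζ x hx).symm
  have hxζ : (x : ℂ) - ζ
      = ((t - r * Real.cos ψ : ℝ) : ℂ) + ((-(r * Real.sin ψ) : ℝ) : ℂ) * Complex.I := by
    have h1 : (x : ℂ) - ζ = ((t : ℝ) : ℂ) - (ζ - (c : ℂ)) := by
      rw [htdef]; push_cast; ring
    rw [h1, hζψ, Complex.exp_mul_I, ← Complex.ofReal_cos, ← Complex.ofReal_sin]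
    push_cast
    ring
  have hD : ‖(x : ℂ) - ζ‖ ^ 2
      = (t - r * Real.cos ψ) ^ 2 + (r * Real.sin ψ) ^ 2 := by
    rw [hxζ, Complex.sq_norm, Complex.normSq_add_mul_I]
    ring
  set D := (t - r * Real.cos ψ) ^ 2 + (r * Real.sin ψ) ^ 2 with hDdef
  have hDpos : 0 < D := by
    rw [← hD]
    exact pow_pos (norm_pos_iff.mpr hne) 2
  have hkey : t ^ 2 ≤ cArg ψ ^ 2 * D ∧ r ^ 2 ≤ cArg ψ ^ 2 * D := by
    by_cases hcase : (0 < ψ ∧ ψ < Real.pi / 2) ∨ (3 * Real.pi / 2 < ψ ∧ ψ < 2 * Real.pi)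
    · have hC2 : cArg ψ ^ 2 = (Real.sin ψ ^ 2)⁻¹ := by
        rw [cArg, if_pos hcase, inv_pow, sq_abs]
      have hs : Real.sin ψ ≠ 0 := by
        rcases hcase with ⟨h1, h2⟩ | ⟨h1, h2⟩
        · exact ne_of_gt (Real.sin_pos_of_pos_of_lt_pi h1 (by linarith [Real.pi_pos]))
        · have hlt : Real.sin (ψ - 2 * Real.pi) < 0 :=
            Real.sin_neg_of_neg_of_neg_pi_lt (by linarith) (by linarith [Real.pi_pos])
          rw [Real.sin_sub_two_pi] at hlt
          exact ne_of_lt hlt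
      have hs2 : 0 < Real.sin ψ ^ 2 := by positivity
      rw [hC2]
      constructor
      · rw [inv_mul_eq_div, le_div_iff₀ hs2]
        nlinarith [sq_nonneg (t * Real.cos ψ - r), Real.sin_sq_add_cos_sq ψ]
      · rw [inv_mul_eq_div, le_div_iff₀ hs2]
        nlinarith [sq_nonneg (t - r * Real.cos ψ)]
    · have hC : cArg ψ = 1 := by rw [cArg, if_neg hcase]
      push_neg at hcase
      obtain ⟨hψ0, hψ2⟩ := hψ
      have h1 : Real.pi / 2 ≤ ψ := hcase.1 hψ0
      have h2 : ψ ≤ 3 * Real.pi / 2 := by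
        by_contra h
        push_neg at h
        linarith [hcase.2 h]
      have hcos : Real.cos ψ ≤ 0 :=
        Real.cos_nonpos_of_pi_div_two_le_of_le h1 (by linarith)
      rw [hC, one_pow, one_mul]
      constructor
      · nlinarith [Real.sin_sq_add_cos_sq ψ,
          mul_nonneg (mul_nonneg ht hr0.le) (neg_nonneg.2 hcos), sq_nonneg r]
      · nlinarith [Real.sin_sq_add_cos_sq ψ,
          mul_nonneg (mul_nonneg ht hr0.le) (neg_nonneg.2 hcos), sq_nonneg t]
  obtain ⟨hDt, hDr⟩ := hkey
  constructor
  · intro hr1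
    rw [hD, inv_pow]
    refine aux_div x D ((c + 1) * cArg ψ ^ 2) (r ^ 2) hDpos (by positivity) ?_
    rcases le_total t 1 with h | h
    · nlinarith [mul_nonneg (by linarith : (0:ℝ) ≤ 1 - t) (sq_nonneg r),
        mul_nonneg (by linarith : (0:ℝ) ≤ c + 1) (by linarith : (0:ℝ) ≤ cArg ψ ^ 2 * D - r ^ 2)]
    · nlinarith [mul_nonneg (by linarith : (0:ℝ) ≤ t + c)
          (by nlinarith : (0:ℝ) ≤ 1 - r ^ 2),
        mul_nonneg ht (by linarith : (0:ℝ) ≤ t - 1),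
        mul_nonneg hc (by nlinarith : (0:ℝ) ≤ t ^ 2 - 1),
        mul_nonneg (by linarith : (0:ℝ) ≤ c + 1) (by linarith : (0:ℝ) ≤ cArg ψ ^ 2 * D - t ^ 2)]
  · intro hr1
    rw [hD]
    refine aux_div x D ((c + 1) * cArg ψ ^ 2) r hDpos hr0 ?_
    rcases le_total t r with h | h
    · nlinarith [mul_nonneg (by linarith : (0:ℝ) ≤ r - t) hr0.le,
        mul_nonneg (mul_nonneg hc hr0.le) (by linarith : (0:ℝ) ≤ r - 1),
        mul_nonneg (by linarith : (0:ℝ) ≤ c + 1) (by linarith : (0:ℝ) ≤ cArg ψ ^ 2 * D - r ^ 2)]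
    · nlinarith [mul_nonneg (by linarith : (0:ℝ) ≤ t + c) (by linarith : (0:ℝ) ≤ t - r),
        mul_nonneg (mul_nonneg hc ht) (by linarith : (0:ℝ) ≤ t - 1),
        mul_nonneg (by linarith : (0:ℝ) ≤ c + 1) (by linarith : (0:ℝ) ≤ cArg ψ ^ 2 * D - t ^ 2)]
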